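/- For coprime integers p, q ≥ 2, choose a, b ∈ ℕ with qa + pb = pq − 1 (which exist and satisfy 1 ≤ a ≤ p−1 or b ≥ 1 appropriately). Then ν(x^p − y^q + x^a y^b) = ν(x^p − y^q) − 1 = (p−1)(q−1) − 1. -/

import Mathlib

open MvPolynomial MeasureTheory

/-- The region `Γ₊(f)`: convex closure of the union of translated positive quadrants at the
points of the support of `f` (omitting the origin). -/
noncomputable def gammaPlus (f : MvPolynomial (Fin 2) ℂ) : Set (ℝ × ℝ) :=
  convexHull ℝ (⋃ m ∈ {m ∈ f.support | m ≠ 0},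
    {z : ℝ × ℝ | (m 0 : ℝ) ≤ z.1 ∧ (m 1 : ℝ) ≤ z.2})

/-- The region bounded by the Newton polygon `Γ(f)` and the coordinate axes. -/
noncomputable def newtonRegion (f : MvPolynomial (Fin 2) ℂ) : Set (ℝ × ℝ) :=
  {z : ℝ × ℝ | 0 ≤ z.1 ∧ 0 ≤ z.2} \ gammaPlus f

/-- The Newton number `ν(f) = 2S - a - b + 1` where `S` is the area of the region bounded
by the Newton polygon and the axes and `a`, `b` are the lengths of the intersections of that
region with the `x`- and `y`-axis. -/
noncomputable def newtonNumber (f : MvPolynomial (Fin 2) ℂ) : ℝ :=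
  2 * (volume (newtonRegion f)).toReal
    - (volume {x : ℝ | (x, (0:ℝ)) ∈ newtonRegion f}).toReal
    - (volume {y : ℝ | ((0:ℝ), y) ∈ newtonRegion f}).toReal + 1

/- ### Auxiliary lemmas -/

lemma combo_ineq (K u v s t : ℝ) (hs : 0 ≤ s) (ht : 0 ≤ t) (hst : s + t = 1)
    (hu : K ≤ u) (hv : K ≤ v) : K ≤ s * u + t * v := by
  have h : K = s * K + t * K := by rw [← add_mul, hst, one_mul]
  rw [h]
  exact add_le_add (mul_le_mul_of_nonneg_left hu hs) (mul_le_mul_of_nonneg_left hv ht)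

/-- Key segment lemma: a point of the halfplane region is a convex combination of points of
two quadrants. -/
lemma aux_mem_hull (x0 y0 P Q : ℝ) (hP : 0 < P) (hQ : 0 < Q) (z : ℝ × ℝ)
    (h1 : x0 ≤ z.1) (h2 : y0 ≤ z.2)
    (h3 : P * Q ≤ Q * (z.1 - x0) + P * (z.2 - y0)) :
    z ∈ convexHull ℝ ({w : ℝ × ℝ | x0 + P ≤ w.1 ∧ y0 ≤ w.2}
      ∪ {w : ℝ × ℝ | x0 ≤ w.1 ∧ y0 + Q ≤ w.2}) := by
  obtain ⟨x, y⟩ := z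
  simp only [Prod.fst, Prod.snd] at h1 h2 h3
  obtain ⟨c, hc⟩ : ∃ c : ℝ, c = Q * (x - x0) + P * (y - y0) := ⟨_, rfl⟩
  have hc0 : 0 < c := by rw [hc]; exact lt_of_lt_of_le (mul_pos hP hQ) h3
  obtain ⟨t, ht⟩ : ∃ t : ℝ, t = Q * (x - x0) / c := ⟨_, rfl⟩
  have hQ' : Q ≠ 0 := hQ.ne'
  have hP' : P ≠ 0 := hP.ne'
  have hc' : c ≠ 0 := hc0.ne'
  have ht0 : 0 ≤ t := by
    rw [ht]
    exact div_nonneg (by nlinarith) hc0.le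
  have ht1 : t ≤ 1 := by
    rw [ht, div_le_one hc0, hc]; nlinarith
  have hA : ((x0 + c / Q, y0) : ℝ × ℝ) ∈ {w : ℝ × ℝ | x0 + P ≤ w.1 ∧ y0 ≤ w.2} := by
    refine ⟨add_le_add (le_refl _) ?_, le_refl _⟩
    rw [le_div_iff₀ hQ]; linarith [hc ▸ h3]
  have hB : ((x0, y0 + c / P) : ℝ × ℝ) ∈ {w : ℝ × ℝ | x0 ≤ w.1 ∧ y0 + Q ≤ w.2} := by
    refine ⟨le_refl _, add_le_add (le_refl _) ?_⟩
    rw [le_div_iff₀ hP]; linarith [hc ▸ h3]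
  have e1 : t * (x0 + c / Q) + (1 - t) * x0 = x := by
    rw [ht]; field_simp; ring
  have e2 : t * y0 + (1 - t) * (y0 + c / P) = y := by
    rw [ht]
    have : c - Q * (x - x0) = P * (y - y0) := by rw [hc]; ring
    field_simp
    linear_combination c * this
  have key : t • ((x0 + c / Q, y0) : ℝ × ℝ) + (1 - t) • ((x0, y0 + c / P) : ℝ × ℝ)
      = ((x, y) : ℝ × ℝ) := by
    refine Prod.ext_iff.mpr ⟨?_, ?_⟩ <;>
      · simp only [Prod.fst_add, Prod.snd_add, Prod.smul_fst, Prod.smul_snd, smul_eq_mul]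
        first | exact e1 | exact e2
  rw [← key]
  exact (convex_convexHull ℝ _) (subset_convexHull ℝ _ (Set.mem_union_left _ hA))
    (subset_convexHull ℝ _ (Set.mem_union_right _ hB)) ht0 (by linarith) (by ring)

lemma hull_two (P Q : ℝ) (hP : 0 < P) (hQ : 0 < Q) :
    convexHull ℝ ({w : ℝ × ℝ | P ≤ w.1 ∧ 0 ≤ w.2} ∪ {w : ℝ × ℝ | 0 ≤ w.1 ∧ Q ≤ w.2})
      = {z : ℝ × ℝ | 0 ≤ z.1 ∧ 0 ≤ z.2 ∧ P * Q ≤ Q * z.1 + P * z.2} := by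
  apply le_antisymm
  · apply convexHull_min
    · rintro w (⟨hw1, hw2⟩ | ⟨hw1, hw2⟩)
      · exact ⟨by linarith, hw2, by nlinarith⟩
      · exact ⟨hw1, by linarith, by nlinarith⟩
    · rintro x ⟨hx1, hx2, hx3⟩ y ⟨hy1, hy2, hy3⟩ s t hs htt hst
      refine ⟨?_, ?_, ?_⟩ <;>
        simp only [Set.mem_setOf_eq, Prod.fst_add, Prod.snd_add, Prod.smul_fst, Prod.smul_snd,
          smul_eq_mul]
      · exact add_nonneg (mul_nonneg hs hx1) (mul_nonneg htt hy1)
      · exact add_nonneg (mul_nonneg hs hx2) (mul_nonneg htt hy2)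
      · linarith [combo_ineq (P * Q) (Q * x.1 + P * x.2) (Q * y.1 + P * y.2) s t hs htt hst
          hx3 hy3]
  · rintro z ⟨hz1, hz2, hz3⟩
    have := aux_mem_hull 0 0 P Q hP hQ z (by linarith) (by linarith) (by nlinarith)
    refine convexHull_mono ?_ this
    rintro w (⟨hw1, hw2⟩ | ⟨hw1, hw2⟩)
    · exact Or.inl ⟨by linarith, by linarith⟩
    · exact Or.inr ⟨by linarith, by linarith⟩

lemma hull_three (p q a b : ℝ) (ha : 0 < a) (hb : 0 < b) (hap : a < p) (hbq : b < q)
    (hsum : q * a + p * b ≤ p * q) :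
    convexHull ℝ ({w : ℝ × ℝ | p ≤ w.1 ∧ 0 ≤ w.2} ∪ {w : ℝ × ℝ | 0 ≤ w.1 ∧ q ≤ w.2}
        ∪ {w : ℝ × ℝ | a ≤ w.1 ∧ b ≤ w.2})
      = {z : ℝ × ℝ | 0 ≤ z.1 ∧ 0 ≤ z.2 ∧ a * q ≤ (q - b) * z.1 + a * z.2
          ∧ p * b ≤ b * z.1 + (p - a) * z.2} := by
  apply le_antisymm
  · apply convexHull_min
    · rintro w ((⟨hw1, hw2⟩ | ⟨hw1, hw2⟩) | ⟨hw1, hw2⟩)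
      · exact ⟨by linarith, hw2, by nlinarith, by nlinarith⟩
      · exact ⟨hw1, by linarith, by nlinarith, by nlinarith⟩
      · exact ⟨by linarith, by linarith, by nlinarith, by nlinarith⟩
    · rintro x ⟨hx1, hx2, hx3, hx4⟩ y ⟨hy1, hy2, hy3, hy4⟩ s t hs htt hst
      refine ⟨?_, ?_, ?_, ?_⟩ <;>
        simp only [Set.mem_setOf_eq, Prod.fst_add, Prod.snd_add, Prod.smul_fst, Prod.smul_snd,
          smul_eq_mul]
      · exact add_nonneg (mul_nonneg hs hx1) (mul_nonneg htt hy1)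
      · exact add_nonneg (mul_nonneg hs hx2) (mul_nonneg htt hy2)
      · linarith [combo_ineq (a * q) ((q - b) * x.1 + a * x.2) ((q - b) * y.1 + a * y.2)
          s t hs htt hst hx3 hy3]
      · linarith [combo_ineq (p * b) (b * x.1 + (p - a) * x.2) (b * y.1 + (p - a) * y.2)
          s t hs htt hst hx4 hy4]
  · rintro z ⟨hz1, hz2, hz3, hz4⟩
    by_cases hyb : b ≤ z.2
    · have := aux_mem_hull 0 b a (q - b) ha (by linarith) z (by linarith) hyb (by nlinarith)
      refine convexHull_mono ?_ this
      rintro w (⟨hw1, hw2⟩ | ⟨hw1, hw2⟩)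
      · exact Or.inr ⟨by linarith, by linarith⟩
      · exact Or.inl (Or.inr ⟨by linarith, by linarith⟩)
    · push_neg at hyb
      have hxa : a ≤ z.1 := by nlinarith
      have := aux_mem_hull a 0 (p - a) b (by linarith) hb z hxa hz2 (by nlinarith)
      refine convexHull_mono ?_ this
      rintro w (⟨hw1, hw2⟩ | ⟨hw1, hw2⟩)
      · exact Or.inl (Or.inl ⟨by linarith, by linarith⟩)
      · exact Or.inr ⟨by linarith, by linarith⟩

/-- Volume of a region under a (continuous, nonnegative) graph over `Ico lo hi`. -/
lemma volume_under (f : ℝ → ℝ) (hf : Continuous f) (lo hi : ℝ)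
    (h0 : ∀ x ∈ Set.Ico lo hi, 0 ≤ f x) :
    volume {z : ℝ × ℝ | z.1 ∈ Set.Ico lo hi ∧ z.2 ∈ Set.Ico 0 (f z.1)}
      = ENNReal.ofReal (∫ x in Set.Ico lo hi, f x) := by
  set S := {z : ℝ × ℝ | z.1 ∈ Set.Ico lo hi ∧ z.2 ∈ Set.Ico 0 (f z.1)} with hS
  set T := regionBetween (fun _ => (0:ℝ)) f (Set.Ico lo hi) with hT
  have hTS : T ⊆ S := by
    rintro ⟨x, y⟩ ⟨hx, hy⟩
    exact ⟨hx, ⟨hy.1.le, hy.2⟩⟩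
  have hST : S \ T ⊆ (Set.univ : Set ℝ) ×ˢ ({0} : Set ℝ) := by
    rintro ⟨x, y⟩ ⟨⟨hx, hy0, hyf⟩, hnt⟩
    have : ¬ (0 < y) := fun h => hnt ⟨hx, h, hyf⟩
    exact ⟨trivial, le_antisymm (not_lt.mp this) hy0⟩
  have hnull : volume ((Set.univ : Set ℝ) ×ˢ ({0} : Set ℝ)) = 0 := by
    rw [Measure.volume_eq_prod, Measure.prod_prod]
    simp
  have hvol : volume S = volume T := by
    apply le_antisymm
    · calc volume S ≤ volume (T ∪ (S \ T)) := by
            apply measure_mono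
            intro z hz
            by_cases h : z ∈ T
            · exact Or.inl h
            · exact Or.inr ⟨hz, h⟩
        _ ≤ volume T + volume (S \ T) := measure_union_le _ _
        _ ≤ volume T + 0 := add_le_add (le_refl _) (le_trans (measure_mono hST) hnull.le)
        _ = volume T := add_zero _
    · exact measure_mono hTS
  rw [hvol, hT, Measure.volume_eq_prod,
    volume_regionBetween_eq_integral (f := fun _ => (0:ℝ)) ((integrable_zero _ _ _).integrableOn)
      (hf.integrableOn_Icc.mono_set Set.Ico_subset_Icc_self) measurableSet_Ico
      (fun x hx => h0 x hx)]
  congr 1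
  apply setIntegral_congr_fun measurableSet_Ico
  intro x _
  simp

lemma integral_linear (c d lo hi : ℝ) (h : lo ≤ hi) :
    ∫ x in Set.Ico lo hi, (c - d * x) = c * (hi - lo) - d * (hi ^ 2 - lo ^ 2) / 2 := by
  rw [MeasureTheory.integral_Ico_eq_integral_Ioo, ← MeasureTheory.integral_Ioc_eq_integral_Ioo,
    ← intervalIntegral.integral_of_le h,
    intervalIntegral.integral_sub intervalIntegrable_const
      ((intervalIntegral.intervalIntegrable_id).const_mul d),
    intervalIntegral.integral_const, intervalIntegral.integral_const_mul, integral_id]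
  simp [smul_eq_mul]
  ring

lemma support_two (p q : ℕ) (hp : 2 ≤ p) (hq : 2 ≤ q) (m : Fin 2 →₀ ℕ) :
    (m ∈ ((X 0 : MvPolynomial (Fin 2) ℂ) ^ p - X 1 ^ q).support ∧ m ≠ 0)
      ↔ m = Finsupp.single 0 p ∨ m = Finsupp.single 1 q := by
  have h12 : (Finsupp.single (0 : Fin 2) p) ≠ Finsupp.single 1 q := by
    intro h
    have h0 := DFunLike.congr_fun h (0 : Fin 2)
    rw [Finsupp.single_eq_same, Finsupp.single_eq_of_ne' (by decide : (1 : Fin 2) ≠ 0)] at h0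
    omega
  have hc : ∀ m : Fin 2 →₀ ℕ, MvPolynomial.coeff m ((X 0 : MvPolynomial (Fin 2) ℂ) ^ p - X 1 ^ q)
      = (if Finsupp.single 0 p = m then 1 else 0) - (if Finsupp.single 1 q = m then 1 else 0) := by
    intro m
    rw [MvPolynomial.coeff_sub, MvPolynomial.coeff_X_pow, MvPolynomial.coeff_X_pow]
  constructor
  · rintro ⟨hm, hm0⟩
    rw [MvPolynomial.mem_support_iff, hc] at hm
    by_contra hcon
    push_neg at hcon
    rw [if_neg (fun h => hcon.1 h.symm), if_neg (fun h => hcon.2 h.symm)] at hm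
    simp at hm
  · rintro (rfl | rfl)
    · refine ⟨?_, ?_⟩
      · rw [MvPolynomial.mem_support_iff, hc, if_pos rfl, if_neg (fun h => h12 h.symm)]
        norm_num
      · simp only [ne_eq, Finsupp.single_eq_zero]
        omega
    · refine ⟨?_, ?_⟩
      · rw [MvPolynomial.mem_support_iff, hc, if_neg h12, if_pos rfl]
        norm_num
      · simp only [ne_eq, Finsupp.single_eq_zero]
        omega

lemma support_three (p q a b : ℕ) (hp : 2 ≤ p) (hq : 2 ≤ q) (ha : 1 ≤ a) (hb : 1 ≤ b)
    (m : Fin 2 →₀ ℕ) :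
    (m ∈ ((X 0 : MvPolynomial (Fin 2) ℂ) ^ p - X 1 ^ q + X 0 ^ a * X 1 ^ b).support ∧ m ≠ 0)
      ↔ m = Finsupp.single 0 p ∨ m = Finsupp.single 1 q
          ∨ m = Finsupp.single 0 a + Finsupp.single 1 b := by
  have e0 : ((Finsupp.single (0:Fin 2) a + Finsupp.single (1:Fin 2) b) : Fin 2 →₀ ℕ) 0 = a := by
    rw [Finsupp.add_apply, Finsupp.single_eq_same,
      Finsupp.single_eq_of_ne' (by decide : (1 : Fin 2) ≠ 0)]
    omega
  have e1 : ((Finsupp.single (0:Fin 2) a + Finsupp.single (1:Fin 2) b) : Fin 2 →₀ ℕ) 1 = b := by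
    rw [Finsupp.add_apply, Finsupp.single_eq_same,
      Finsupp.single_eq_of_ne' (by decide : (0 : Fin 2) ≠ 1)]
    omega
  have h12 : (Finsupp.single (0 : Fin 2) p) ≠ Finsupp.single 1 q := by
    intro h
    have h0 := DFunLike.congr_fun h (0 : Fin 2)
    rw [Finsupp.single_eq_same, Finsupp.single_eq_of_ne' (by decide : (1 : Fin 2) ≠ 0)] at h0
    omega
  have h31 : (Finsupp.single (0:Fin 2) a + Finsupp.single (1:Fin 2) b)
      ≠ Finsupp.single (0 : Fin 2) p := by
    intro h
    have h0 := DFunLike.congr_fun h (1 : Fin 2)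
    rw [e1, Finsupp.single_eq_of_ne' (by decide : (0 : Fin 2) ≠ 1)] at h0
    omega
  have h32 : (Finsupp.single (0:Fin 2) a + Finsupp.single (1:Fin 2) b)
      ≠ Finsupp.single (1 : Fin 2) q := by
    intro h
    have h0 := DFunLike.congr_fun h (0 : Fin 2)
    rw [e0, Finsupp.single_eq_of_ne' (by decide : (1 : Fin 2) ≠ 0)] at h0
    omega
  have h30 : (Finsupp.single (0:Fin 2) a + Finsupp.single (1:Fin 2) b) ≠ 0 := by
    intro h
    have h0 := DFunLike.congr_fun h (0 : Fin 2)
    rw [e0] at h0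
    simp at h0
    omega
  have hc : ∀ m : Fin 2 →₀ ℕ,
      MvPolynomial.coeff m ((X 0 : MvPolynomial (Fin 2) ℂ) ^ p - X 1 ^ q + X 0 ^ a * X 1 ^ b)
      = (if Finsupp.single 0 p = m then 1 else 0) - (if Finsupp.single 1 q = m then 1 else 0)
        + (if Finsupp.single 0 a + Finsupp.single 1 b = m then 1 else 0) := by
    intro m
    rw [MvPolynomial.coeff_add, MvPolynomial.coeff_sub, MvPolynomial.coeff_X_pow,
      MvPolynomial.coeff_X_pow, X_pow_eq_monomial, X_pow_eq_monomial, monomial_mul,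
      MvPolynomial.coeff_monomial, one_mul]
  constructor
  · rintro ⟨hm, hm0⟩
    rw [MvPolynomial.mem_support_iff, hc] at hm
    by_contra hcon
    push_neg at hcon
    rw [if_neg (fun h => hcon.1 h.symm), if_neg (fun h => hcon.2.1 h.symm),
      if_neg (fun h => hcon.2.2 h.symm)] at hm
    simp at hm
  · rintro (rfl | rfl | rfl)
    · refine ⟨?_, ?_⟩
      · rw [MvPolynomial.mem_support_iff, hc, if_pos rfl, if_neg (fun h => h12 h.symm),
          if_neg h31]
        norm_num
      · simp only [ne_eq, Finsupp.single_eq_zero]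
        omega
    · refine ⟨?_, ?_⟩
      · rw [MvPolynomial.mem_support_iff, hc, if_neg h12, if_pos rfl, if_neg h32]
        norm_num
      · simp only [ne_eq, Finsupp.single_eq_zero]
        omega
    · refine ⟨?_, ?_⟩
      · rw [MvPolynomial.mem_support_iff, hc, if_neg (fun h => h31 h.symm),
          if_neg (fun h => h32 h.symm), if_pos rfl]
        norm_num
      · exact h30

lemma region1_char (p q x y : ℝ) (hp : 0 < p) (hq : 0 < q) :
    ((0 ≤ x ∧ 0 ≤ y) ∧ ¬(0 ≤ x ∧ 0 ≤ y ∧ p * q ≤ q * x + p * y))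
      ↔ (x ∈ Set.Ico 0 p ∧ y ∈ Set.Ico 0 ((p * q - q * x) / p)) := by
  constructor
  · rintro ⟨⟨h1, h2⟩, h3⟩
    have h4 : q * x + p * y < p * q := by
      by_contra h5
      push_neg at h5
      exact h3 ⟨h1, h2, h5⟩
    refine ⟨⟨h1, by nlinarith⟩, h2, ?_⟩
    rw [lt_div_iff₀ hp]
    nlinarith
  · rintro ⟨⟨h1, h1'⟩, h2, h3⟩
    rw [lt_div_iff₀ hp] at h3
    exact ⟨⟨h1, h2⟩, fun hcon => by nlinarith [hcon.2.2]⟩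

lemma region2_char (p q a b x y : ℝ) (ha : 0 < a) (hb : 0 < b) (hap : a < p) (hbq : b < q)
    (hkey : q * a + p * b = p * q - 1) :
    ((0 ≤ x ∧ 0 ≤ y) ∧ ¬(0 ≤ x ∧ 0 ≤ y ∧ a * q ≤ (q - b) * x + a * y
        ∧ p * b ≤ b * x + (p - a) * y))
      ↔ ((x ∈ Set.Ico 0 a ∧ y ∈ Set.Ico 0 ((a * q - (q - b) * x) / a))
          ∨ (x ∈ Set.Ico a p ∧ y ∈ Set.Ico 0 ((p * b - b * x) / (p - a)))) := by
  have hpa : (0:ℝ) < p - a := by linarith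
  have hqb : (0:ℝ) < q - b := by linarith
  constructor
  · rintro ⟨⟨h1, h2⟩, h3⟩
    have h4 : (q - b) * x + a * y < a * q ∨ b * x + (p - a) * y < p * b := by
      by_contra h5
      push_neg at h5
      exact h3 ⟨h1, h2, h5.1, h5.2⟩
    by_cases hxa : x < a
    · refine Or.inl ⟨⟨h1, hxa⟩, h2, ?_⟩
      rw [lt_div_iff₀ ha]
      rcases h4 with c1 | c2
      · linarith
      · nlinarith [mul_lt_mul_of_pos_left c2 ha, hkey, hpa]
    · push_neg at hxa
      have hxp : x < p := by
        rcases h4 with c1 | c2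
        · nlinarith [mul_nonneg ha.le h2, hkey]
        · nlinarith [mul_nonneg hpa.le h2]
      refine Or.inr ⟨⟨hxa, hxp⟩, h2, ?_⟩
      rw [lt_div_iff₀ hpa]
      rcases h4 with c1 | c2
      · nlinarith [mul_lt_mul_of_pos_left c1 hpa, hkey, ha]
      · linarith
  · rintro (⟨⟨h1, h1'⟩, h2, h3⟩ | ⟨⟨h1, h1'⟩, h2, h3⟩)
    · rw [lt_div_iff₀ ha] at h3
      exact ⟨⟨h1, h2⟩, fun hcon => by linarith [hcon.2.2.1]⟩
    · rw [lt_div_iff₀ hpa] at h3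
      exact ⟨⟨by linarith, h2⟩, fun hcon => by linarith [hcon.2.2.2]⟩

set_option maxHeartbeats 1000000 in
/-- For coprime `p, q ≥ 2`, lattice points `(a,b) ∈ ℕ²` with `qa + pb = pq - 1` exist, and
for any such point `ν(x^p - y^q + x^a y^b) = ν(x^p - y^q) - 1 = (p-1)(q-1) - 1`. -/
theorem nu_drop_one_coprime (p q : ℕ) (hp : 2 ≤ p) (hq : 2 ≤ q)
    (hpq : Nat.gcd p q = 1) :
    (∃ a b : ℕ, q * a + p * b = p * q - 1) ∧
    ∀ a b : ℕ, q * a + p * b = p * q - 1 →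
      newtonNumber ((X 0) ^ p - (X 1) ^ q + (X 0) ^ a * (X 1) ^ b)
          = newtonNumber ((X 0) ^ p - (X 1) ^ q) - 1 ∧
      newtonNumber ((X 0) ^ p - (X 1) ^ q) - 1 = ((p : ℝ) - 1) * ((q : ℝ) - 1) - 1 := by
  have hpq1 : 1 ≤ p * q := Nat.one_le_iff_ne_zero.mpr (Nat.mul_ne_zero (by omega) (by omega))
  have hP0 : (0:ℝ) < (p:ℝ) := by exact_mod_cast (show 0 < p by omega)
  have hQ0 : (0:ℝ) < (q:ℝ) := by exact_mod_cast (show 0 < q by omega)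
  constructor
  · -- existence of (a, b)
    haveI : NeZero p := ⟨by omega⟩
    have hcop : Nat.Coprime q p := Nat.Coprime.symm hpq
    obtain ⟨u, hu⟩ : ∃ u : ZMod p, u = (q : ZMod p)⁻¹ * (-1) := ⟨_, rfl⟩
    refine ⟨u.val, ?_⟩
    have hqa : ((q * u.val : ℕ) : ZMod p) = ((p * q - 1 : ℕ) : ZMod p) := by
      rw [Nat.cast_sub hpq1]
      push_cast
      rw [ZMod.natCast_val, ZMod.cast_id, ZMod.natCast_self, hu, ← mul_assoc,
        ZMod.mul_inv_of_unit _ ((ZMod.isUnit_iff_coprime q p).mpr hcop)]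
      ring
    have hle : q * u.val ≤ p * q - 1 := by
      have h1 : u.val ≤ p - 1 := by have := ZMod.val_lt u; omega
      have h2 : q * u.val ≤ q * (p - 1) := Nat.mul_le_mul_left _ h1
      have h3 : q * (p - 1) + q = q * p := by
        rw [← Nat.mul_succ]
        congr 1
        omega
      have h5 : q * u.val + 1 ≤ p * q := by
        calc q * u.val + 1 ≤ q * (p - 1) + q := Nat.add_le_add h2 (by omega)
          _ = q * p := h3
          _ = p * q := Nat.mul_comm q p
      exact Nat.le_pred_of_lt (Nat.lt_of_succ_le h5)
    have hmod : q * u.val ≡ p * q - 1 [MOD p] := (ZMod.natCast_eq_natCast_iff _ _ _).mp hqa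
    obtain ⟨b, hb⟩ := (Nat.modEq_iff_dvd' hle).mp hmod
    refine ⟨b, ?_⟩
    rw [← hb, Nat.add_sub_cancel' hle]
  · intro a b hab
    -- basic arithmetic facts about a and b
    have hb1 : 1 ≤ b := by
      by_contra hcon
      have hb0 : b = 0 := by omega
      subst hb0
      rw [Nat.mul_zero, Nat.add_zero] at hab
      have hd1 : q ∣ p * q := dvd_mul_left q p
      have hd2 : q ∣ p * q - 1 := hab ▸ dvd_mul_right q a
      have hd3 : q ∣ 1 := by
        have h := Nat.dvd_sub hd1 hd2
        rwa [Nat.sub_sub_self hpq1] at h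
      have := Nat.le_of_dvd Nat.one_pos hd3
      omega
    have ha1 : 1 ≤ a := by
      by_contra hcon
      have ha0 : a = 0 := by omega
      subst ha0
      rw [Nat.mul_zero, Nat.zero_add] at hab
      have hd1 : p ∣ p * q := dvd_mul_right p q
      have hd2 : p ∣ p * q - 1 := hab ▸ dvd_mul_right p b
      have hd3 : p ∣ 1 := by
        have h := Nat.dvd_sub hd1 hd2
        rwa [Nat.sub_sub_self hpq1] at h
      have := Nat.le_of_dvd Nat.one_pos hd3
      omega
    have hap : a < p := by
      apply Nat.lt_of_mul_lt_mul_left (a := q)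
      calc q * a ≤ p * q - 1 := le_trans (Nat.le_add_right _ _) (le_of_eq hab)
        _ < p * q := Nat.sub_lt (by omega) Nat.one_pos
        _ = q * p := Nat.mul_comm p q
    have hbq : b < q := by
      apply Nat.lt_of_mul_lt_mul_left (a := p)
      calc p * b ≤ p * q - 1 := le_trans (Nat.le_add_left _ _) (le_of_eq hab)
        _ < p * q := Nat.sub_lt (by omega) Nat.one_pos
    -- real versions
    have hA0 : (0:ℝ) < (a:ℝ) := by exact_mod_cast (show 0 < a by omega)
    have hB0 : (0:ℝ) < (b:ℝ) := by exact_mod_cast (show 0 < b by omega)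
    have hAP : (a:ℝ) < (p:ℝ) := by exact_mod_cast hap
    have hBQ : (b:ℝ) < (q:ℝ) := by exact_mod_cast hbq
    have hPA : (0:ℝ) < (p:ℝ) - a := by linarith
    have hQB : (0:ℝ) < (q:ℝ) - b := by linarith
    have hkeyR : (q:ℝ) * a + (p:ℝ) * b = (p:ℝ) * q - 1 := by
      have h1 : ((q * a + p * b : ℕ) : ℝ) = ((p * q - 1 : ℕ) : ℝ) := by rw [hab]
      rw [Nat.cast_sub hpq1] at h1
      push_cast at h1
      linarith
    -- the Newton polygon regions
    have hg1 : gammaPlus ((X 0) ^ p - (X 1) ^ q)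
        = {z : ℝ × ℝ | 0 ≤ z.1 ∧ 0 ≤ z.2 ∧ (p:ℝ) * q ≤ (q:ℝ) * z.1 + (p:ℝ) * z.2} := by
      unfold gammaPlus
      rw [← hull_two (p:ℝ) (q:ℝ) hP0 hQ0]
      congr 1
      ext z
      simp only [Finset.mem_filter, Set.mem_iUnion, Set.mem_union, Set.mem_setOf_eq, exists_prop]
      constructor
      · rintro ⟨m, hm, hz⟩
        rcases (support_two p q hp hq m).mp hm with rfl | rfl
        · exact Or.inl (by
            simpa [Finsupp.single_eq_same,
              Finsupp.single_eq_of_ne (by decide : (0:Fin 2) ≠ 1)] using hz)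
        · exact Or.inr (by
            simpa [Finsupp.single_eq_same,
              Finsupp.single_eq_of_ne (by decide : (1:Fin 2) ≠ 0)] using hz)
      · rintro (hz | hz)
        · exact ⟨Finsupp.single 0 p, (support_two p q hp hq _).mpr (Or.inl rfl), by
            simpa [Finsupp.single_eq_same,
              Finsupp.single_eq_of_ne (by decide : (0:Fin 2) ≠ 1)] using hz⟩
        · exact ⟨Finsupp.single 1 q, (support_two p q hp hq _).mpr (Or.inr rfl), by
            simpa [Finsupp.single_eq_same,
              Finsupp.single_eq_of_ne (by decide : (1:Fin 2) ≠ 0)] using hz⟩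
    have hg2 : gammaPlus ((X 0) ^ p - (X 1) ^ q + (X 0) ^ a * (X 1) ^ b)
        = {z : ℝ × ℝ | 0 ≤ z.1 ∧ 0 ≤ z.2 ∧ (a:ℝ) * q ≤ ((q:ℝ) - b) * z.1 + (a:ℝ) * z.2
            ∧ (p:ℝ) * b ≤ (b:ℝ) * z.1 + ((p:ℝ) - a) * z.2} := by
      unfold gammaPlus
      rw [← hull_three (p:ℝ) (q:ℝ) (a:ℝ) (b:ℝ) hA0 hB0 hAP hBQ (by linarith)]
      congr 1
      ext z
      simp only [Finset.mem_filter, Set.mem_iUnion, Set.mem_union, Set.mem_setOf_eq, exists_prop]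
      constructor
      · rintro ⟨m, hm, hz⟩
        rcases (support_three p q a b hp hq ha1 hb1 m).mp hm with rfl | rfl | rfl
        · exact Or.inl (Or.inl (by
            simpa [Finsupp.single_eq_same,
              Finsupp.single_eq_of_ne (by decide : (0:Fin 2) ≠ 1)] using hz))
        · exact Or.inl (Or.inr (by
            simpa [Finsupp.single_eq_same,
              Finsupp.single_eq_of_ne (by decide : (1:Fin 2) ≠ 0)] using hz))
        · exact Or.inr (by
            simpa [Finsupp.coe_add, Pi.add_apply, Finsupp.single_eq_same,
              Finsupp.single_eq_of_ne (by decide : (0:Fin 2) ≠ 1),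
              Finsupp.single_eq_of_ne (by decide : (1:Fin 2) ≠ 0)] using hz)
      · rintro ((hz | hz) | hz)
        · exact ⟨Finsupp.single 0 p, (support_three p q a b hp hq ha1 hb1 _).mpr (Or.inl rfl), by
            simpa [Finsupp.single_eq_same,
              Finsupp.single_eq_of_ne (by decide : (0:Fin 2) ≠ 1)] using hz⟩
        · exact ⟨Finsupp.single 1 q,
            (support_three p q a b hp hq ha1 hb1 _).mpr (Or.inr (Or.inl rfl)), by
            simpa [Finsupp.single_eq_same,
              Finsupp.single_eq_of_ne (by decide : (1:Fin 2) ≠ 0)] using hz⟩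
        · exact ⟨Finsupp.single 0 a + Finsupp.single 1 b,
            (support_three p q a b hp hq ha1 hb1 _).mpr (Or.inr (Or.inr rfl)), by
            simpa [Finsupp.coe_add, Pi.add_apply, Finsupp.single_eq_same,
              Finsupp.single_eq_of_ne (by decide : (0:Fin 2) ≠ 1),
              Finsupp.single_eq_of_ne (by decide : (1:Fin 2) ≠ 0)] using hz⟩
    have hreg1 : newtonRegion ((X 0) ^ p - (X 1) ^ q)
        = {z : ℝ × ℝ | z.1 ∈ Set.Ico (0:ℝ) (p:ℝ)
            ∧ z.2 ∈ Set.Ico (0:ℝ) (((p:ℝ) * q - q * z.1) / p)} := by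
      unfold newtonRegion
      rw [hg1]
      ext z
      simp only [Set.mem_diff, Set.mem_setOf_eq]
      exact region1_char (p:ℝ) (q:ℝ) z.1 z.2 hP0 hQ0
    have hreg2 : newtonRegion ((X 0) ^ p - (X 1) ^ q + (X 0) ^ a * (X 1) ^ b)
        = {z : ℝ × ℝ | z.1 ∈ Set.Ico (0:ℝ) (a:ℝ)
              ∧ z.2 ∈ Set.Ico (0:ℝ) (((a:ℝ) * q - ((q:ℝ) - b) * z.1) / a)}
          ∪ {z : ℝ × ℝ | z.1 ∈ Set.Ico (a:ℝ) (p:ℝ)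
              ∧ z.2 ∈ Set.Ico (0:ℝ) (((p:ℝ) * b - b * z.1) / ((p:ℝ) - a))} := by
      unfold newtonRegion
      rw [hg2]
      ext z
      simp only [Set.mem_diff, Set.mem_setOf_eq, Set.mem_union]
      exact region2_char (p:ℝ) (q:ℝ) (a:ℝ) (b:ℝ) z.1 z.2 hA0 hB0 hAP hBQ hkeyR
    -- volumes
    have hcont1 : Continuous (fun x : ℝ => ((p:ℝ) * q - q * x) / p) := by fun_prop
    have hnn1 : ∀ x ∈ Set.Ico (0:ℝ) (p:ℝ), 0 ≤ ((p:ℝ) * q - q * x) / p := by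
      intro x hx
      apply div_nonneg _ hP0.le
      nlinarith [mul_le_mul_of_nonneg_left hx.2.le hQ0.le]
    have hint1 : ∫ x in Set.Ico (0:ℝ) (p:ℝ), ((p:ℝ) * q - q * x) / p = (p:ℝ) * q / 2 := by
      rw [MeasureTheory.integral_div, integral_linear _ _ _ _ hP0.le]
      field_simp
      ring
    have hvol1 : volume (newtonRegion ((X 0) ^ p - (X 1) ^ q))
        = ENNReal.ofReal ((p:ℝ) * q / 2) := by
      rw [hreg1, ← hint1]
      exact volume_under (fun x : ℝ => ((p:ℝ) * q - q * x) / p) hcont1 _ _ hnn1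
    have hcontA : Continuous (fun x : ℝ => ((a:ℝ) * q - ((q:ℝ) - b) * x) / a) := by fun_prop
    have hcontB : Continuous (fun x : ℝ => ((p:ℝ) * b - b * x) / ((p:ℝ) - a)) := by fun_prop
    have hnnA : ∀ x ∈ Set.Ico (0:ℝ) (a:ℝ), 0 ≤ ((a:ℝ) * q - ((q:ℝ) - b) * x) / a := by
      intro x hx
      apply div_nonneg _ hA0.le
      nlinarith [mul_nonneg hQB.le (by linarith [hx.2.le] : (0:ℝ) ≤ (a:ℝ) - x),
        mul_pos hA0 hB0]
    have hnnB : ∀ x ∈ Set.Ico (a:ℝ) (p:ℝ), 0 ≤ ((p:ℝ) * b - b * x) / ((p:ℝ) - a) := by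
      intro x hx
      apply div_nonneg _ hPA.le
      nlinarith [mul_le_mul_of_nonneg_left hx.2.le hB0.le]
    have hintA : ∫ x in Set.Ico (0:ℝ) (a:ℝ), ((a:ℝ) * q - ((q:ℝ) - b) * x) / a
        = (a:ℝ) * ((q:ℝ) + b) / 2 := by
      rw [MeasureTheory.integral_div, integral_linear _ _ _ _ hA0.le]
      field_simp
      ring
    have hintB : ∫ x in Set.Ico (a:ℝ) (p:ℝ), ((p:ℝ) * b - b * x) / ((p:ℝ) - a)
        = (b:ℝ) * ((p:ℝ) - a) / 2 := by
      rw [MeasureTheory.integral_div, integral_linear _ _ _ _ hAP.le]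
      rw [div_eq_iff hPA.ne']
      ring
    have hvolA : volume {z : ℝ × ℝ | z.1 ∈ Set.Ico (0:ℝ) (a:ℝ)
          ∧ z.2 ∈ Set.Ico (0:ℝ) (((a:ℝ) * q - ((q:ℝ) - b) * z.1) / a)}
        = ENNReal.ofReal ((a:ℝ) * ((q:ℝ) + b) / 2) := by
      rw [← hintA]
      exact volume_under (fun x : ℝ => ((a:ℝ) * q - ((q:ℝ) - b) * x) / a) hcontA _ _ hnnA
    have hvolB : volume {z : ℝ × ℝ | z.1 ∈ Set.Ico (a:ℝ) (p:ℝ)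
          ∧ z.2 ∈ Set.Ico (0:ℝ) (((p:ℝ) * b - b * z.1) / ((p:ℝ) - a))}
        = ENNReal.ofReal ((b:ℝ) * ((p:ℝ) - a) / 2) := by
      rw [← hintB]
      exact volume_under (fun x : ℝ => ((p:ℝ) * b - b * x) / ((p:ℝ) - a)) hcontB _ _ hnnB
    have hdisj : Disjoint
        {z : ℝ × ℝ | z.1 ∈ Set.Ico (0:ℝ) (a:ℝ)
          ∧ z.2 ∈ Set.Ico (0:ℝ) (((a:ℝ) * q - ((q:ℝ) - b) * z.1) / a)}
        {z : ℝ × ℝ | z.1 ∈ Set.Ico (a:ℝ) (p:ℝ)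
          ∧ z.2 ∈ Set.Ico (0:ℝ) (((p:ℝ) * b - b * z.1) / ((p:ℝ) - a))} := by
      rw [Set.disjoint_left]
      rintro z ⟨⟨_, h1⟩, _⟩ ⟨⟨h2, _⟩, _⟩
      exact absurd (lt_of_le_of_lt h2 h1) (lt_irrefl _)
    have hmeasB : MeasurableSet {z : ℝ × ℝ | z.1 ∈ Set.Ico (a:ℝ) (p:ℝ)
          ∧ z.2 ∈ Set.Ico (0:ℝ) (((p:ℝ) * b - b * z.1) / ((p:ℝ) - a))} := by
      exact measurableSet_region_between_co (f := fun _ => (0:ℝ))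
        (g := fun x : ℝ => ((p:ℝ) * b - b * x) / ((p:ℝ) - a))
        measurable_const hcontB.measurable measurableSet_Ico
    have hvol2 : volume (newtonRegion ((X 0) ^ p - (X 1) ^ q + (X 0) ^ a * (X 1) ^ b))
        = ENNReal.ofReal ((a:ℝ) * ((q:ℝ) + b) / 2)
          + ENNReal.ofReal ((b:ℝ) * ((p:ℝ) - a) / 2) := by
      rw [hreg2, measure_union hdisj hmeasB, hvolA, hvolB]
    -- axis intersections
    have hax1 : {x : ℝ | (x, (0:ℝ)) ∈ newtonRegion ((X 0) ^ p - (X 1) ^ q)}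
        = Set.Ico (0:ℝ) (p:ℝ) := by
      rw [hreg1]
      ext x
      simp only [Set.mem_setOf_eq, Set.mem_Ico]
      constructor
      · rintro ⟨h1, _⟩
        exact h1
      · intro hx
        refine ⟨hx, le_refl 0, ?_⟩
        apply div_pos _ hP0
        nlinarith [mul_lt_mul_of_pos_left hx.2 hQ0]
    have hay1 : {y : ℝ | ((0:ℝ), y) ∈ newtonRegion ((X 0) ^ p - (X 1) ^ q)}
        = Set.Ico (0:ℝ) (q:ℝ) := by
      rw [hreg1]
      ext y
      have hl0 : ((p:ℝ) * q - (q:ℝ) * 0) / p = (q:ℝ) := by field_simp; ring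
      simp only [Set.mem_setOf_eq, Set.mem_Ico]
      constructor
      · rintro ⟨_, h2, h3⟩
        exact ⟨h2, by rw [← hl0]; exact h3⟩
      · rintro ⟨h1, h2⟩
        exact ⟨⟨le_refl 0, hP0⟩, h1, by rw [hl0]; exact h2⟩
    have hax2 : {x : ℝ | (x, (0:ℝ))
          ∈ newtonRegion ((X 0) ^ p - (X 1) ^ q + (X 0) ^ a * (X 1) ^ b)}
        = Set.Ico (0:ℝ) (p:ℝ) := by
      rw [hreg2]
      ext x
      simp only [Set.mem_union, Set.mem_setOf_eq, Set.mem_Ico]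
      constructor
      · rintro (⟨⟨h1, h2⟩, _⟩ | ⟨⟨h1, h2⟩, _⟩)
        · exact ⟨h1, by linarith⟩
        · exact ⟨by linarith, h2⟩
      · intro hx
        by_cases hxa : x < (a:ℝ)
        · left
          refine ⟨⟨hx.1, hxa⟩, le_refl 0, ?_⟩
          apply div_pos _ hA0
          nlinarith [mul_lt_mul_of_pos_left hxa hQB, mul_pos hA0 hB0]
        · push_neg at hxa
          right
          refine ⟨⟨hxa, hx.2⟩, le_refl 0, ?_⟩
          apply div_pos _ hPA
          nlinarith [mul_lt_mul_of_pos_left hx.2 hB0]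
    have hay2 : {y : ℝ | ((0:ℝ), y)
          ∈ newtonRegion ((X 0) ^ p - (X 1) ^ q + (X 0) ^ a * (X 1) ^ b)}
        = Set.Ico (0:ℝ) (q:ℝ) := by
      rw [hreg2]
      ext y
      have hl0 : ((a:ℝ) * q - ((q:ℝ) - b) * 0) / a = (q:ℝ) := by field_simp; ring
      simp only [Set.mem_union, Set.mem_setOf_eq, Set.mem_Ico]
      constructor
      · rintro (⟨_, h2, h3⟩ | ⟨⟨h1, _⟩, _⟩)
        · exact ⟨h2, by rw [← hl0]; exact h3⟩
        · exact absurd h1 (not_le.mpr hA0)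
      · intro hy
        exact Or.inl ⟨⟨le_refl 0, hA0⟩, hy.1, by rw [hl0]; exact hy.2⟩
    -- put everything together
    have hvol1R : (volume (newtonRegion ((X 0) ^ p - (X 1) ^ q))).toReal = (p:ℝ) * q / 2 := by
      rw [hvol1, ENNReal.toReal_ofReal (by positivity)]
    have hvol2R : (volume (newtonRegion ((X 0) ^ p - (X 1) ^ q
          + (X 0) ^ a * (X 1) ^ b))).toReal = ((p:ℝ) * q - 1) / 2 := by
      have e1 : (0:ℝ) ≤ (a:ℝ) * ((q:ℝ) + b) / 2 := by positivity
      have e2 : (0:ℝ) ≤ (b:ℝ) * ((p:ℝ) - a) / 2 :=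
        div_nonneg (mul_nonneg hB0.le hPA.le) (by norm_num)
      rw [hvol2, ← ENNReal.ofReal_add e1 e2, ENNReal.toReal_ofReal (by linarith)]
      linarith [hkeyR]
    have hax1R : (volume {x : ℝ | (x, (0:ℝ))
        ∈ newtonRegion ((X 0) ^ p - (X 1) ^ q)}).toReal = (p:ℝ) := by
      rw [hax1, Real.volume_Ico, ENNReal.toReal_ofReal (by linarith), sub_zero]
    have hay1R : (volume {y : ℝ | ((0:ℝ), y)
        ∈ newtonRegion ((X 0) ^ p - (X 1) ^ q)}).toReal = (q:ℝ) := by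
      rw [hay1, Real.volume_Ico, ENNReal.toReal_ofReal (by linarith), sub_zero]
    have hax2R : (volume {x : ℝ | (x, (0:ℝ))
        ∈ newtonRegion ((X 0) ^ p - (X 1) ^ q + (X 0) ^ a * (X 1) ^ b)}).toReal = (p:ℝ) := by
      rw [hax2, Real.volume_Ico, ENNReal.toReal_ofReal (by linarith), sub_zero]
    have hay2R : (volume {y : ℝ | ((0:ℝ), y)
        ∈ newtonRegion ((X 0) ^ p - (X 1) ^ q + (X 0) ^ a * (X 1) ^ b)}).toReal = (q:ℝ) := by
      rw [hay2, Real.volume_Ico, ENNReal.toReal_ofReal (by linarith), sub_zero]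
    have nn1 : newtonNumber ((X 0) ^ p - (X 1) ^ q) = (p:ℝ) * q - p - q + 1 := by
      unfold newtonNumber
      rw [hvol1R, hax1R, hay1R]
      ring
    have nn2 : newtonNumber ((X 0) ^ p - (X 1) ^ q + (X 0) ^ a * (X 1) ^ b)
        = (p:ℝ) * q - 1 - p - q + 1 := by
      unfold newtonNumber
      rw [hvol2R, hax2R, hay2R]
      ring
    exact ⟨by rw [nn1, nn2]; ring, by rw [nn1]; ring⟩
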